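/- Let X be a topological vector space over ℝ and let f : X → ℝ be a discontinuous additive function. Then the set T = {x ∈ X : f(x) ≤ 0} belongs to the Kuczma–Ger class 𝓒_X but not to the class 𝓑_X; that is: (1) every additive function g : X → ℝ whose image g[T] is a bounded subset of ℝ is continuous, and (2) there exists an additive function h : X → ℝ (namely h = f) with sup h[T] ≤ 0 < ∞ which is discontinuous. In particular 𝓑_X ≠ 𝓒_X. -/

import Mathlib

open Set Filter Topology

/-- If `f` is a discontinuous additive functional on a topological vector space `X`, then
`T = {x | f x ≤ 0}` belongs to the Kuczma–Ger class `𝓒_X` but not to `𝓑_X`: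
(1) every additive `g : X → ℝ` with `g '' T` bounded is continuous, and
(2) the additive function `f` itself is discontinuous although `sup f[T] ≤ 0 < ∞`. -/
theorem statement5 {X : Type*} [TopologicalSpace X] [AddCommGroup X] [Module ℝ X]
    [IsTopologicalAddGroup X] [ContinuousSMul ℝ X]
    (f : X → ℝ) (hadd : ∀ x y : X, f (x + y) = f x + f y) (hdisc : ¬ Continuous f) :
    (∀ g : X → ℝ, (∀ x y : X, g (x + y) = g x + g y) →
      Bornology.IsBounded (g '' {x : X | f x ≤ 0}) → Continuous g) ∧
    (∀ x ∈ {x : X | f x ≤ 0}, f x ≤ 0) ∧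
    ¬ Continuous f := by
  refine ⟨?_, fun x hx => hx, hdisc⟩
  intro g hg hb
  set F : X →+ ℝ := AddMonoidHom.mk' f hadd with hF
  set G : X →+ ℝ := AddMonoidHom.mk' g hg with hG
  obtain ⟨C, hC⟩ := isBounded_iff_forall_norm_le.mp hb
  -- if G x ∈ T for all multiples, then G x = 0
  have key : ∀ x : X, f x ≤ 0 → g x = 0 := by
    intro x hx
    by_contra hne
    -- |n • g x| ≤ C for all n
    have hn : ∀ n : ℕ, (n : ℝ) * |g x| ≤ C := by
      intro n
      have hmem : f (n • x) ≤ 0 := by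
        have : F (n • x) = n • F x := map_nsmul F n x
        simp only [hF, AddMonoidHom.mk'_apply] at this
        rw [this]
        simpa using nsmul_nonpos hx n
      have := hC (g (n • x)) ⟨n • x, hmem, rfl⟩
      have hGn : G (n • x) = n • G x := map_nsmul G n x
      simp only [hG, AddMonoidHom.mk'_apply] at hGn
      rw [hGn] at this
      simpa [abs_mul, Nat.abs_cast] using this
    have habs : 0 < |g x| := abs_pos.mpr hne
    obtain ⟨n, hn'⟩ := exists_nat_gt (C / |g x|)
    have h1 := hn n
    have h2 : C < (n : ℝ) * |g x| := (div_lt_iff₀ habs).mp hn'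
    linarith
  -- g vanishes everywhere
  have hzero : ∀ x : X, g x = 0 := by
    intro x
    rcases le_or_gt (f x) 0 with h | h
    · exact key x h
    · have hfx : f (-x) ≤ 0 := by
        have : F (-x) = -F x := map_neg F x
        simp only [hF, AddMonoidHom.mk'_apply] at this
        rw [this]; linarith
      have h1 : g (-x) = 0 := key _ hfx
      have h2 : G (-x) = -G x := map_neg G x
      simp only [hG, AddMonoidHom.mk'_apply] at h2
      rw [h2] at h1; linarith
  have : g = fun _ => (0 : ℝ) := funext hzero
  rw [this]
  exact continuous_const
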